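/- Let $\Omega$ be a commutative semigroup. Every BiHom-$\Omega$-associative algebra $(A, \bullet_{\alpha,\beta}, p_\alpha, q_\alpha)_{\alpha,\beta\in\Omega}$ is a BiHom-$\Omega$-pre-Lie algebra with the same operations and structure maps. -/
import Mathlib

/-- Every BiHom-Ω-associative algebra is a BiHom-Ω-pre-Lie algebra. -/
theorem stmt_9
    {K : Type*} [Field K] {Ω : Type*} [CommSemigroup Ω]
    {A : Type*} [AddCommGroup A] [Module K A]
    (mul : Ω → Ω → A →ₗ[K] A →ₗ[K] A)
    (p q : Ω → A →ₗ[K] A)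
    -- (A, mul, p, q) is a BiHom-Ω-associative algebra
    (hp : ∀ (α β : Ω) (x y : A), p (α * β) (mul α β x y) = mul α β (p α x) (p β y))
    (hq : ∀ (α β : Ω) (x y : A), q (α * β) (mul α β x y) = mul α β (q α x) (q β y))
    (hpq : ∀ (α : Ω) (x : A), p α (q α x) = q α (p α x))
    (hassoc : ∀ (α β γ : Ω) (x y z : A),
      mul α (β * γ) (p α x) (mul β γ y z) = mul (α * β) γ (mul α β x y) (q γ z)) :
    -- (A, mul, p, q) is a BiHom-Ω-pre-Lie algebra
    (∀ (α β : Ω) (x y : A), p (α * β) (mul α β x y) = mul α β (p α x) (p β y)) ∧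
    (∀ (α β : Ω) (x y : A), q (α * β) (mul α β x y) = mul α β (q α x) (q β y)) ∧
    (∀ (α β γ : Ω) (x y z : A),
      mul α (β * γ) (p α (q α x)) (mul β γ (p β y) z)
          - mul (α * β) γ (mul α β (q α x) (p β y)) (q γ z)
        = mul β (α * γ) (p β (q β y)) (mul α γ (p α x) z)
          - mul (β * α) γ (mul β α (q β y) (p α x)) (q γ z)) := by
  refine ⟨hp, hq, fun α β γ x y z => ?_⟩
  rw [hassoc α β γ (q α x) (p β y) z, hassoc β α γ (q β y) (p α x) z, sub_self, sub_self]
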